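/- Let ψ be a solution of the non-homogeneous equation y'' + b(x)y' + c(x)y = F(x) on [a, ∞), and ψ_p a particular solution, with ψ - ψ_p not identically zero. If Q(x) = -(1/4)(b² - 4c + 2b') ≥ ε² on [a, ∞) for some ε > 0, then ψ - ψ_p has infinitely many zeros in [a, ∞), i.e., ψ oscillates about ψ_p. -/

import Mathlib

private lemma neg_inv_le_one_of_le_neg_one {v : ℝ} (h : v ≤ -1) : -v⁻¹ ≤ 1 := by
  have h0 : v ≠ 0 := by intro h0; rw [h0] at h; linarith
  have hm := mul_inv_cancel₀ h0
  nlinarith [sq_nonneg (v⁻¹ + 1)]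

/-- Non-homogeneous extension: if Q = -(1/4)(b² - 4c + 2b') ≥ ε² on [a,∞) and
ψ, ψp both solve y'' + b y' + c y = F with ψ - ψp not identically zero, then
ψ - ψp has infinitely many zeros in [a,∞). -/
theorem oscillation_about_particular (b c F ψ ψp : ℝ → ℝ) (a ε : ℝ) (hε : 0 < ε)
    (hb : ContDiff ℝ 1 b) (hc : ContinuousOn c (Set.Ici a))
    (hF : ContinuousOn F (Set.Ici a))
    (hQ : ∀ x, a ≤ x → ε ^ 2 ≤ -(1/4) * (b x ^ 2 - 4 * c x + 2 * deriv b x))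
    (hψd : Differentiable ℝ ψ) (hψd' : Differentiable ℝ (deriv ψ))
    (hψpd : Differentiable ℝ ψp) (hψpd' : Differentiable ℝ (deriv ψp))
    (hode : ∀ x, a ≤ x → deriv (deriv ψ) x + b x * deriv ψ x + c x * ψ x = F x)
    (hodep : ∀ x, a ≤ x → deriv (deriv ψp) x + b x * deriv ψp x + c x * ψp x = F x)
    (hnt : ∃ x, a ≤ x ∧ ψ x - ψp x ≠ 0) :
    {x | a ≤ x ∧ ψ x - ψp x = 0}.Infinite := by
  by_contra hinf
  rw [Set.not_infinite] at hinf
  set u : ℝ → ℝ := fun x => ψ x - ψp x with hu_def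
  have hu : Differentiable ℝ u := hψd.sub hψpd
  have hud : ∀ x, deriv u x = deriv ψ x - deriv ψp x := fun x =>
    deriv_sub (hψd x) (hψpd x)
  have hue : deriv u = fun x => deriv ψ x - deriv ψp x := funext hud
  have hu' : Differentiable ℝ (deriv u) := by
    rw [hue]; exact hψd'.sub hψpd'
  have huode : ∀ x, a ≤ x → deriv (deriv u) x = -(b x * deriv u x) - c x * u x := by
    intro x hx
    have h2 : deriv (deriv u) x = deriv (deriv ψ) x - deriv (deriv ψp) x := by
      rw [hue, deriv_fun_sub (hψd' x) (hψpd' x)]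
    have e1 := hode x hx
    have e2 := hodep x hx
    rw [h2, hud x]
    simp only [hu_def]
    ring_nf
    nlinarith [e1, e2]
  -- choose X beyond all zeros of u
  have hBdd : BddAbove {x | a ≤ x ∧ ψ x - ψp x = 0} := hinf.bddAbove
  set X := max a (sSup {x | a ≤ x ∧ ψ x - ψp x = 0} + 1) with hX_def
  have hXa : a ≤ X := le_max_left _ _
  have hune : ∀ x, X ≤ x → u x ≠ 0 := by
    intro x hx h0
    have hax : a ≤ x := hXa.trans hx
    have h1 : x ≤ sSup {x | a ≤ x ∧ ψ x - ψp x = 0} := le_csSup hBdd ⟨hax, h0⟩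
    have h2 : sSup {x | a ≤ x ∧ ψ x - ψp x = 0} + 1 ≤ x := (le_max_right a _).trans hx
    linarith
  -- Riccati variable
  set w : ℝ → ℝ := fun x => deriv u x / u x + b x / 2 with hw_def
  have hbd : Differentiable ℝ b := hb.differentiable one_ne_zero
  have hwderiv : ∀ x, X ≤ x → HasDerivAt w
      ((deriv (deriv u) x * u x - deriv u x * deriv u x) / u x ^ 2 + deriv b x / 2) x := by
    intro x hx
    exact ((hu' x).hasDerivAt.div (hu x).hasDerivAt (hune x hx)).add
      (((hbd x).hasDerivAt).div_const 2)
  have hQ' : ∀ x, X ≤ x → deriv w x ≤ -(w x)^2 - ε^2 ∧ DifferentiableAt ℝ w x := by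
    intro x hx
    have hd := hwderiv x hx
    have hne := hune x hx
    have hode2 := huode x (hXa.trans hx)
    have heq : (deriv (deriv u) x * u x - deriv u x * deriv u x) / u x ^ 2 + deriv b x / 2
        = -(w x)^2 - (c x - b x^2/4 - deriv b x / 2) := by
      rw [hode2]
      simp only [hw_def]
      field_simp
      ring
    have hQx := hQ x (hXa.trans hx)
    refine ⟨?_, hd.differentiableAt⟩
    rw [hd.deriv, heq]
    nlinarith [hQx]
  -- w + ε² x is antitone on [X, ∞)
  have hg : AntitoneOn (fun x => w x + ε^2 * x) (Set.Ici X) := by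
    apply antitoneOn_of_deriv_nonpos (convex_Ici X)
    · intro x hx
      exact (((hQ' x hx).2.add ((differentiableAt_const _).mul
        differentiableAt_id)).continuousAt).continuousWithinAt
    · intro x hx
      rw [interior_Ici] at hx
      exact ((hQ' x hx.le).2.add ((differentiableAt_const _).mul
        differentiableAt_id)).differentiableWithinAt
    · intro x hx
      rw [interior_Ici] at hx
      have hdx := hQ' x hx.le
      have hh : HasDerivAt (fun x => w x + ε ^ 2 * x) (deriv w x + ε ^ 2 * 1) x :=
        hdx.2.hasDerivAt.add ((hasDerivAt_id x).const_mul (ε ^ 2))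
      rw [hh.deriv]
      nlinarith [hdx.1, sq_nonneg (w x)]
  have hdecay : ∀ x y, X ≤ x → x ≤ y → w y ≤ w x - ε^2 * (y - x) := by
    intro x y hx hxy
    have := hg (Set.mem_Ici.mpr hx) (Set.mem_Ici.mpr (hx.trans hxy)) hxy
    simp only at this
    linarith
  -- find x1 with w x1 ≤ -1
  set x1 := max X (X + (w X + 1) / ε^2) with hx1_def
  have hx1X : X ≤ x1 := le_max_left _ _
  have hε2 : (0:ℝ) < ε^2 := by positivity
  have hwx1 : w x1 ≤ -1 := by
    have h1 : X + (w X + 1) / ε^2 ≤ x1 := le_max_right _ _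
    have h2 : w X + 1 ≤ ε^2 * (x1 - X) := by
      have : (w X + 1) / ε^2 ≤ x1 - X := by linarith
      calc w X + 1 = ε^2 * ((w X + 1) / ε^2) := by field_simp
        _ ≤ ε^2 * (x1 - X) := by
            exact mul_le_mul_of_nonneg_left this hε2.le
    have := hdecay X x1 le_rfl hx1X
    linarith
  have hwneg : ∀ x, x1 ≤ x → w x ≤ -1 := by
    intro x hx
    have := hdecay x1 x hx1X hx
    nlinarith [mul_nonneg hε2.le (by linarith : (0:ℝ) ≤ x - x1)]
  -- -(w x)⁻¹ + x is antitone on [x1, ∞)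
  have hwne : ∀ x, x1 ≤ x → w x ≠ 0 := by
    intro x hx
    have := hwneg x hx
    intro h0; rw [h0] at this; linarith
  have hinvd : ∀ x, x1 ≤ x → HasDerivAt (fun y => -(w y)⁻¹ + y)
      (deriv w x / w x ^ 2 + 1) x := by
    intro x hx
    have h1 : HasDerivAt w (deriv w x) x := ((hQ' x (hx1X.trans hx)).2).hasDerivAt
    have h2 := (h1.inv (hwne x hx)).neg
    have h3 : -(-(deriv w x) / w x ^ 2) = deriv w x / w x ^ 2 := by ring
    rw [h3] at h2
    exact h2.add (hasDerivAt_id x)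
  have hg2 : AntitoneOn (fun x => -(w x)⁻¹ + x) (Set.Ici x1) := by
    apply antitoneOn_of_deriv_nonpos (convex_Ici x1)
    · intro x hx
      exact (hinvd x hx).continuousAt.continuousWithinAt
    · intro x hx
      rw [interior_Ici] at hx
      exact (hinvd x hx.le).differentiableAt.differentiableWithinAt
    · intro x hx
      rw [interior_Ici] at hx
      rw [(hinvd x hx.le).deriv]
      have hb1 := (hQ' x (hx1X.trans hx.le)).1
      have hw1 := hwneg x hx.le
      have hwsq : (1:ℝ) ≤ w x ^ 2 := by nlinarith
      have : deriv w x / w x ^ 2 ≤ -1 := by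
        rw [div_le_iff₀ (by positivity)]
        nlinarith
      linarith
  -- contradiction at x = x1 + 2
  have hx2 : x1 ≤ x1 + 2 := by linarith
  have hmono := hg2 (Set.mem_Ici.mpr le_rfl) (Set.mem_Ici.mpr hx2) hx2
  simp only at hmono
  have hw1 := hwneg x1 le_rfl
  have hw2 := hwneg (x1 + 2) hx2
  have hi1 : -(w x1)⁻¹ ≤ 1 := neg_inv_le_one_of_le_neg_one hw1
  have hi2 : 0 < -(w (x1+2))⁻¹ := by
    have : (w (x1+2))⁻¹ < 0 := inv_lt_zero.mpr (by linarith)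
    linarith
  linarith
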